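/- arXiv:2202.12989 — 11 statements merged into one kernel-verified Lean document; each statement's English description precedes it below -/
import Mathlib

section
/- Finite-sample control of the generalized familywise error rate by the augmented selection procedure: let (Ω, F, P) be a probability space, let p, k be natural numbers, let N ⊆ Fin p be a fixed set (the null indices), and let S, A : Ω → Finset (Fin p) be measurable maps such that the cardinality of A(ω) is at most k for every ω ∈ Ω. If P({ω : S(ω) ∩ N ≠ ∅}) ≤ α for some α ∈ [0,1], then P({ω : |(S(ω) ∪ A(ω)) ∩ N| ≥ k + 1}) ≤ α. -/
open MeasureTheory

/-- Finite-sample control of the generalized familywise error rate by the augmented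
selection procedure: if the initial selection `S` makes a type I error (selects some
null index in `N`) with probability at most `α`, and the augmentation set `A` always
has at most `k` elements, then the probability that the augmented selection `S ∪ A`
contains at least `k + 1` null indices is at most `α`. -/
theorem gfwer_finite_sample
    {Ω : Type*} [MeasurableSpace Ω] (P : Measure Ω) [IsProbabilityMeasure P]
    (p k : ℕ) (N : Finset (Fin p)) (S A : Ω → Finset (Fin p))
    (hS : @Measurable Ω (Finset (Fin p)) _ ⊤ S)
    (hA : @Measurable Ω (Finset (Fin p)) _ ⊤ A)
    (hAk : ∀ ω, (A ω).card ≤ k)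
    (α : ℝ) (hα : α ∈ Set.Icc (0 : ℝ) 1)
    (hfwer : P {ω | S ω ∩ N ≠ ∅} ≤ ENNReal.ofReal α) :
    P {ω | k + 1 ≤ ((S ω ∪ A ω) ∩ N).card} ≤ ENNReal.ofReal α := by
  refine le_trans (measure_mono ?_) hfwer
  intro ω hω
  simp only [Set.mem_setOf_eq] at hω ⊢
  intro hSN
  have hsub : (S ω ∪ A ω) ∩ N ⊆ A ω := by
    intro x hx
    rcases Finset.mem_inter.1 hx with ⟨hx1, hx2⟩
    rcases Finset.mem_union.1 hx1 with h | h
    · exact absurd (Finset.eq_empty_iff_forall_notMem.1 hSN x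
        (Finset.mem_inter.2 ⟨h, hx2⟩)) (fun h => h)
    · exact h
  have := Finset.card_le_card hsub
  have h2 := hAk ω
  omega
end

section
/- Finite-sample control of the proportion of false positives by the augmented selection procedure: let (Ω, F, P) be a probability space, p a natural number, q ∈ (0,1), N ⊆ Fin p a fixed set (the null indices), and S, A : Ω → Finset (Fin p) measurable maps such that for every ω, A(ω) ∩ S(ω) = ∅ and |A(ω)| ≤ q · (|A(ω)| + |S(ω)|). If P({ω : S(ω) ∩ N ≠ ∅}) ≤ α for some α ∈ [0,1], then P({ω : S(ω) ∪ A(ω) ≠ ∅ and |(S(ω) ∪ A(ω)) ∩ N| > q · |S(ω) ∪ A(ω)|}) ≤ α. -/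
open MeasureTheory

/-- Finite-sample control of the proportion of false positives by the augmented
selection procedure: if the initial selection `S` makes a type I error with probability
at most `α`, and the augmentation set `A` is always disjoint from `S` with
`|A| ≤ q (|A| + |S|)`, then the probability that the proportion of null indices among
the selected indices `S ∪ A` exceeds `q` is at most `α`. -/
theorem pfp_finite_sample
    {Ω : Type*} [MeasurableSpace Ω] (P : Measure Ω) [IsProbabilityMeasure P]
    (p : ℕ) (q : ℝ) (hq : q ∈ Set.Ioo (0 : ℝ) 1)
    (N : Finset (Fin p)) (S A : Ω → Finset (Fin p))
    (hS : @Measurable Ω (Finset (Fin p)) _ ⊤ S)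
    (hA : @Measurable Ω (Finset (Fin p)) _ ⊤ A)
    (hdisj : ∀ ω, A ω ∩ S ω = ∅)
    (hprop : ∀ ω, ((A ω).card : ℝ) ≤ q * (((A ω).card : ℝ) + ((S ω).card : ℝ)))
    (α : ℝ) (hα : α ∈ Set.Icc (0 : ℝ) 1)
    (hfwer : P {ω | S ω ∩ N ≠ ∅} ≤ ENNReal.ofReal α) :
    P {ω | S ω ∪ A ω ≠ ∅ ∧
        q * (((S ω ∪ A ω).card : ℝ)) < (((S ω ∪ A ω) ∩ N).card : ℝ)} ≤
      ENNReal.ofReal α := by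
  refine le_trans (measure_mono ?_) hfwer
  intro ω hω
  obtain ⟨hne, hlt⟩ := hω
  simp only [Set.mem_setOf_eq]
  intro hSN
  -- If S ω ∩ N = ∅, then (S∪A)∩N ⊆ A, so card ≤ |A| ≤ q(|A|+|S|) = q|S∪A|
  have hsub : (S ω ∪ A ω) ∩ N ⊆ A ω := by
    intro x hx
    rw [Finset.mem_inter, Finset.mem_union] at hx
    rcases hx.1 with h | h
    · exact absurd (Finset.mem_inter.mpr ⟨h, hx.2⟩) (by simp [hSN])
    · exact h
  have hcard : (((S ω ∪ A ω) ∩ N).card : ℝ) ≤ (A ω).card := by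
    exact_mod_cast Finset.card_le_card hsub
  have hunion : ((S ω ∪ A ω).card : ℝ) = (A ω).card + (S ω).card := by
    have : Disjoint (S ω) (A ω) := by
      rw [disjoint_comm, Finset.disjoint_iff_inter_eq_empty]
      exact hdisj ω
    rw [Finset.card_union_of_disjoint this]
    push_cast; ring
  have := hprop ω
  rw [hunion] at hlt
  linarith
end

section
/- Finite-sample bound on the false discovery rate of the augmented selection procedure: let (Ω, F, P) be a probability space, p a natural number, q ∈ (0,1), α ∈ [0,1], N ⊆ Fin p a fixed set (the null indices), and S, A : Ω → Finset (Fin p) measurable maps such that for every ω, A(ω) ∩ S(ω) = ∅ and |A(ω)| ≤ q · (|A(ω)| + |S(ω)|). Suppose P({ω : S(ω) ∩ N ≠ ∅}) ≤ α. Define the false discovery proportion FDP(ω) := |(S(ω) ∪ A(ω)) ∩ N| / |S(ω) ∪ A(ω)| when S(ω) ∪ A(ω) ≠ ∅ and FDP(ω) := 0 otherwise. Then the expectation satisfies E[FDP] ≤ q(1 − α) + α. -/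
open MeasureTheory

/-- Finite-sample bound on the false discovery rate of the augmented selection
procedure: if the initial selection `S` makes a type I error with probability at most
`α`, and the augmentation set `A` is always disjoint from `S` with
`|A| ≤ q (|A| + |S|)`, then the expected false discovery proportion of the augmented
selection `S ∪ A` is at most `q (1 - α) + α`. -/
theorem fdr_finite_sample
    {Ω : Type*} [MeasurableSpace Ω] (P : Measure Ω) [IsProbabilityMeasure P]
    (p : ℕ) (q : ℝ) (hq : q ∈ Set.Ioo (0 : ℝ) 1)
    (α : ℝ) (hα : α ∈ Set.Icc (0 : ℝ) 1)
    (N : Finset (Fin p)) (S A : Ω → Finset (Fin p))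
    (hS : @Measurable Ω (Finset (Fin p)) _ ⊤ S)
    (hA : @Measurable Ω (Finset (Fin p)) _ ⊤ A)
    (hdisj : ∀ ω, A ω ∩ S ω = ∅)
    (hprop : ∀ ω, ((A ω).card : ℝ) ≤ q * (((A ω).card : ℝ) + ((S ω).card : ℝ)))
    (hfwer : P {ω | S ω ∩ N ≠ ∅} ≤ ENNReal.ofReal α)
    (FDP : Ω → ℝ)
    (hFDP : ∀ ω, FDP ω =
      if S ω ∪ A ω ≠ ∅ then (((S ω ∪ A ω) ∩ N).card : ℝ) / (((S ω ∪ A ω).card : ℝ))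
      else 0) :
    ∫ ω, FDP ω ∂P ≤ q * (1 - α) + α := by
  obtain ⟨hq0, hq1⟩ := hq
  obtain ⟨hα0, hα1⟩ := hα
  letI mF : MeasurableSpace (Finset (Fin p)) := ⊤
  letI : MeasurableSingletonClass (Finset (Fin p)) :=
    ⟨fun _ => MeasurableSpace.measurableSet_top⟩
  set E : Set Ω := {ω | S ω ∩ N ≠ ∅} with hEdef
  have hE : MeasurableSet E := by
    have h1 : E = S ⁻¹' {s : Finset (Fin p) | s ∩ N ≠ ∅} := rfl
    rw [h1]; exact hS MeasurableSpace.measurableSet_top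
  -- pointwise bounds
  have hFDP01 : ∀ ω, 0 ≤ FDP ω ∧ FDP ω ≤ 1 := by
    intro ω
    rw [hFDP ω]
    by_cases h : S ω ∪ A ω ≠ ∅
    · simp only [if_pos h]
      have hpos : (0:ℝ) < ((S ω ∪ A ω).card : ℝ) := by
        have := Finset.card_pos.2 (Finset.nonempty_iff_ne_empty.2 h)
        exact_mod_cast this
      constructor
      · positivity
      · rw [div_le_one hpos]
        exact_mod_cast Finset.card_le_card (Finset.inter_subset_left)
    · simp [h]
  have hkey : ∀ ω, ω ∉ E → FDP ω ≤ q := by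
    intro ω hω
    have hSN : S ω ∩ N = ∅ := by simpa [hEdef] using hω
    rw [hFDP ω]
    by_cases h : S ω ∪ A ω ≠ ∅
    · simp only [if_pos h]
      have hpos : (0:ℝ) < ((S ω ∪ A ω).card : ℝ) := by
        have := Finset.card_pos.2 (Finset.nonempty_iff_ne_empty.2 h)
        exact_mod_cast this
      rw [div_le_iff₀ hpos]
      have hsub : (S ω ∪ A ω) ∩ N ⊆ A ω := by
        intro x hx
        simp only [Finset.mem_inter, Finset.mem_union] at hx
        rcases hx.1 with hxs | hxa
        · exact absurd (Finset.mem_inter.2 ⟨hxs, hx.2⟩) (by simp [hSN])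
        · exact hxa
      have hcard : (((S ω ∪ A ω) ∩ N).card : ℝ) ≤ (A ω).card := by
        exact_mod_cast Finset.card_le_card hsub
      have hdisj' : Disjoint (S ω) (A ω) := by
        rw [Finset.disjoint_iff_inter_eq_empty, Finset.inter_comm]
        exact hdisj ω
      have hcu : ((S ω ∪ A ω).card : ℝ) = (A ω).card + (S ω).card := by
        rw [Finset.card_union_of_disjoint hdisj']
        push_cast; ring
      calc (((S ω ∪ A ω) ∩ N).card : ℝ) ≤ (A ω).card := hcard
        _ ≤ q * ((A ω).card + (S ω).card) := hprop ω
        _ = q * ((S ω ∪ A ω).card : ℝ) := by rw [hcu]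
    · simp only [if_neg h]; exact le_of_lt hq0
  -- measurability of FDP
  have hmeas : Measurable FDP := by
    have heq : FDP = (fun sa : Finset (Fin p) × Finset (Fin p) =>
        if sa.1 ∪ sa.2 ≠ ∅ then (((sa.1 ∪ sa.2) ∩ N).card : ℝ) / ((sa.1 ∪ sa.2).card : ℝ)
        else 0) ∘ (fun ω => (S ω, A ω)) := funext fun ω => by rw [hFDP ω]; rfl
    rw [heq]
    exact (measurable_of_countable _).comp (hS.prodMk hA)
  -- the dominating function
  set g : Ω → ℝ := fun ω => E.indicator (fun _ => (1 - q)) ω + q with hgdef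
  have hgint : Integrable g P :=
    ((integrable_const (1 - q)).indicator hE).add (integrable_const q)
  have hfint : Integrable FDP P := by
    refine (integrable_const (1:ℝ)).mono' hmeas.aestronglyMeasurable (ae_of_all _ fun ω => ?_)
    rw [Real.norm_eq_abs, abs_of_nonneg (hFDP01 ω).1]
    exact (hFDP01 ω).2
  have hle : ∀ ω, FDP ω ≤ g ω := by
    intro ω
    by_cases hω : ω ∈ E
    · simp only [hgdef, Set.indicator_of_mem hω]
      linarith [(hFDP01 ω).2]
    · simp only [hgdef, Set.indicator_of_notMem hω]
      linarith [hkey ω hω]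
  have hint_le : ∫ ω, FDP ω ∂P ≤ ∫ ω, g ω ∂P := integral_mono hfint hgint hle
  have hgval : ∫ ω, g ω ∂P = (P E).toReal * (1 - q) + q := by
    rw [hgdef]
    rw [integral_add ((integrable_const (1 - q)).indicator hE) (integrable_const q)]
    rw [integral_indicator_const _ hE, integral_const]
    simp [smul_eq_mul, measureReal_def]
  have hPE : (P E).toReal ≤ α := ENNReal.toReal_le_of_le_ofReal hα0 hfwer
  have hPE0 : 0 ≤ (P E).toReal := ENNReal.toReal_nonneg
  calc ∫ ω, FDP ω ∂P ≤ (P E).toReal * (1 - q) + q := by rw [← hgval]; exact hint_le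
    _ ≤ α * (1 - q) + q := by nlinarith
    _ = q * (1 - α) + α := by ring
end

section
/- Asymptotic control of the generalized familywise error rate by the augmented selection procedure: let (Ω, F, P) be a probability space, p, k natural numbers, α ∈ [0,1], N ⊆ Fin p a fixed set (the null indices), and for each n ∈ ℕ let S_n, A_n : Ω → Finset (Fin p) be measurable maps with |A_n(ω)| ≤ k for every ω. If limsup_{n→∞} P({ω : S_n(ω) ∩ N ≠ ∅}) ≤ α, then limsup_{n→∞} P({ω : |(S_n(ω) ∪ A_n(ω)) ∩ N| ≥ k + 1}) ≤ α. -/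
open MeasureTheory Filter

/-- Asymptotic control of the generalized familywise error rate by the augmented
selection procedure: if, for each sample size `n`, the initial selection `S n` makes a
type I error with probability asymptotically at most `α`, and each augmentation set
`A n` has at most `k` elements, then the probability that the augmented selection
`S n ∪ A n` contains at least `k + 1` null indices is asymptotically at most `α`. -/
theorem gfwer_asymptotic
    {Ω : Type*} [MeasurableSpace Ω] (P : Measure Ω) [IsProbabilityMeasure P]
    (p k : ℕ) (α : ℝ) (hα : α ∈ Set.Icc (0 : ℝ) 1)
    (N : Finset (Fin p)) (S A : ℕ → Ω → Finset (Fin p))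
    (hS : ∀ n, @Measurable Ω (Finset (Fin p)) _ ⊤ (S n))
    (hA : ∀ n, @Measurable Ω (Finset (Fin p)) _ ⊤ (A n))
    (hAk : ∀ n ω, (A n ω).card ≤ k)
    (hfwer : atTop.limsup (fun n => P {ω | S n ω ∩ N ≠ ∅}) ≤ ENNReal.ofReal α) :
    atTop.limsup (fun n => P {ω | k + 1 ≤ ((S n ω ∪ A n ω) ∩ N).card}) ≤
      ENNReal.ofReal α := by
  refine le_trans (Filter.limsup_le_limsup ?_) hfwer
  refine Filter.Eventually.of_forall fun n => ?_
  refine measure_mono fun ω hω => ?_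
  simp only [Set.mem_setOf_eq] at hω ⊢
  intro hempty
  have : (S n ω ∪ A n ω) ∩ N ⊆ A n ω := by
    intro x hx
    rw [Finset.mem_inter, Finset.mem_union] at hx
    rcases hx.1 with h | h
    · exact absurd (Finset.eq_empty_iff_forall_notMem.mp hempty x
        (Finset.mem_inter.mpr ⟨h, hx.2⟩)) (fun h => h)
    · exact h
  have := Finset.card_le_card this
  have hk := hAk n ω
  omega
end

section
/- Asymptotic bound on the false discovery rate of the augmented selection procedure: let (Ω, F, P) be a probability space, p a natural number, q ∈ (0,1), α ∈ [0,1], N ⊆ Fin p a fixed set (the null indices), and for each n ∈ ℕ let S_n, A_n : Ω → Finset (Fin p) be measurable maps such that for every ω, A_n(ω) ∩ S_n(ω) = ∅ and |A_n(ω)| ≤ q · (|A_n(ω)| + |S_n(ω)|). Suppose limsup_{n→∞} P({ω : S_n(ω) ∩ N ≠ ∅}) ≤ α. Define FDP_n(ω) := |(S_n(ω) ∪ A_n(ω)) ∩ N| / |S_n(ω) ∪ A_n(ω)| when S_n(ω) ∪ A_n(ω) ≠ ∅ and FDP_n(ω) := 0 otherwise. Then limsup_{n→∞} E[FDP_n]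 ≤ q(1 − α) + α. -/
open MeasureTheory Filter

/-- Asymptotic bound on the false discovery rate of the augmented selection procedure:
if, for each sample size `n`, the initial selection `S n` makes a type I error with
probability asymptotically at most `α`, and each augmentation set `A n` is disjoint
from `S n` with `|A n| ≤ q (|A n| + |S n|)`, then the expected false discovery
proportion of the augmented selection `S n ∪ A n` is asymptotically at most
`q (1 - α) + α`. -/
theorem fdr_asymptotic
    {Ω : Type*} [MeasurableSpace Ω] (P : Measure Ω) [IsProbabilityMeasure P]
    (p : ℕ) (q : ℝ) (hq : q ∈ Set.Ioo (0 : ℝ) 1)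
    (α : ℝ) (hα : α ∈ Set.Icc (0 : ℝ) 1)
    (N : Finset (Fin p)) (S A : ℕ → Ω → Finset (Fin p))
    (hS : ∀ n, @Measurable Ω (Finset (Fin p)) _ ⊤ (S n))
    (hA : ∀ n, @Measurable Ω (Finset (Fin p)) _ ⊤ (A n))
    (hdisj : ∀ n ω, A n ω ∩ S n ω = ∅)
    (hprop : ∀ n ω, ((A n ω).card : ℝ) ≤ q * (((A n ω).card : ℝ) + ((S n ω).card : ℝ)))
    (hfwer : atTop.limsup (fun n => P {ω | S n ω ∩ N ≠ ∅}) ≤ ENNReal.ofReal α)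
    (FDP : ℕ → Ω → ℝ)
    (hFDP : ∀ n ω, FDP n ω =
      if S n ω ∪ A n ω ≠ ∅ then
        (((S n ω ∪ A n ω) ∩ N).card : ℝ) / (((S n ω ∪ A n ω).card : ℝ))
      else 0) :
    atTop.limsup (fun n => ∫ ω, FDP n ω ∂P) ≤ q * (1 - α) + α := by
  obtain ⟨hq0, hq1⟩ := hq
  obtain ⟨hα0, hα1⟩ := hα
  letI : MeasurableSpace (Finset (Fin p)) := ⊤
  set E : ℕ → Set Ω := fun n => {ω | S n ω ∩ N ≠ ∅} with hE
  have hEmeas : ∀ n, MeasurableSet (E n) := by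
    intro n
    have : E n = (S n) ⁻¹' {s | s ∩ N ≠ ∅} := rfl
    rw [this]
    exact (hS n) (MeasurableSet.of_discrete)
  have hFDP_nonneg : ∀ n ω, 0 ≤ FDP n ω := by
    intro n ω
    rw [hFDP]
    split
    · positivity
    · exact le_refl 0
  have hFDP_le_one : ∀ n ω, FDP n ω ≤ 1 := by
    intro n ω
    rw [hFDP]
    split
    · rename_i h
      have hpos : (0:ℝ) < ((S n ω ∪ A n ω).card : ℝ) := by
        have := Finset.card_pos.2 (Finset.nonempty_iff_ne_empty.2 h)
        exact_mod_cast this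
      rw [div_le_one hpos]
      exact_mod_cast Finset.card_le_card (Finset.inter_subset_left)
    · norm_num
  have hbound : ∀ n ω,
      FDP n ω ≤ q + (1 - q) * (E n).indicator (fun _ => (1:ℝ)) ω := by
    intro n ω
    by_cases hN : S n ω ∩ N = ∅
    · have hω : ω ∉ E n := by simp [hE, hN]
      rw [Set.indicator_of_notMem hω, mul_zero, add_zero, hFDP]
      split
      · rename_i h
        have hpos : (0:ℝ) < ((S n ω ∪ A n ω).card : ℝ) := by
          have := Finset.card_pos.2 (Finset.nonempty_iff_ne_empty.2 h)
          exact_mod_cast this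
        rw [div_le_iff₀ hpos]
        have hsub : (S n ω ∪ A n ω) ∩ N ⊆ A n ω := by
          intro x hx
          simp only [Finset.mem_inter, Finset.mem_union] at hx
          rcases hx.1 with hs | ha
          · exfalso
            have : x ∈ S n ω ∩ N := Finset.mem_inter.2 ⟨hs, hx.2⟩
            simp [hN] at this
          · exact ha
        have hcard : (((S n ω ∪ A n ω) ∩ N).card : ℝ) ≤ ((A n ω).card : ℝ) := by
          exact_mod_cast Finset.card_le_card hsub
        have hdisj' : Disjoint (S n ω) (A n ω) := by
          rw [Finset.disjoint_iff_inter_eq_empty, Finset.inter_comm]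
          exact hdisj n ω
        have hcardu : ((S n ω ∪ A n ω).card : ℝ)
            = ((A n ω).card : ℝ) + ((S n ω).card : ℝ) := by
          rw [Finset.card_union_of_disjoint hdisj']
          push_cast
          ring
        calc (((S n ω ∪ A n ω) ∩ N).card : ℝ) ≤ ((A n ω).card : ℝ) := hcard
          _ ≤ q * (((A n ω).card : ℝ) + ((S n ω).card : ℝ)) := hprop n ω
          _ = q * ((S n ω ∪ A n ω).card : ℝ) := by rw [hcardu]
      · exact hq0.le
    · have hω : ω ∈ E n := hN
      rw [Set.indicator_of_mem hω]
      have : q + (1 - q) * 1 = 1 := by ring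
      rw [this]
      exact hFDP_le_one n ω
  have hFDPmeas : ∀ n, Measurable (FDP n) := by
    intro n
    have heq : FDP n = (fun sa : Finset (Fin p) × Finset (Fin p) =>
        if sa.1 ∪ sa.2 ≠ ∅ then
          (((sa.1 ∪ sa.2) ∩ N).card : ℝ) / (((sa.1 ∪ sa.2).card : ℝ))
        else 0) ∘ (fun ω => (S n ω, A n ω)) := by
      funext ω
      simp [hFDP n ω]
    rw [heq]
    exact Measurable.of_discrete.comp ((hS n).prodMk (hA n))
  have hint : ∀ n, Integrable (FDP n) P := by
    intro n
    refine (integrable_const (1:ℝ)).mono' (hFDPmeas n).aestronglyMeasurable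
      (ae_of_all _ fun ω => ?_)
    rw [Real.norm_eq_abs, abs_of_nonneg (hFDP_nonneg n ω)]
    exact hFDP_le_one n ω
  have hintR : ∀ n, Integrable
      (fun ω => q + (1 - q) * (E n).indicator (fun _ => (1:ℝ)) ω) P := by
    intro n
    exact (integrable_const q).add
      (((integrable_const (1:ℝ)).indicator (hEmeas n)).const_mul _)
  have hIle : ∀ n, ∫ ω, FDP n ω ∂P ≤ q + (1 - q) * (P (E n)).toReal := by
    intro n
    calc ∫ ω, FDP n ω ∂P
        ≤ ∫ ω, (q + (1 - q) * (E n).indicator (fun _ => (1:ℝ)) ω) ∂P :=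
          integral_mono (hint n) (hintR n) (hbound n)
      _ = q + (1 - q) * (P (E n)).toReal := by
          rw [integral_add (integrable_const q)
              (((integrable_const (1:ℝ)).indicator (hEmeas n)).const_mul _),
            integral_const, probReal_univ, one_smul,
            integral_const_mul]
          congr 1
          rw [integral_indicator_const (1:ℝ) (hEmeas n), smul_eq_mul, mul_one]
          rfl
  have hnonneg : ∀ n, (0:ℝ) ≤ ∫ ω, FDP n ω ∂P :=
    fun n => integral_nonneg (hFDP_nonneg n)
  have hle_one : ∀ n, ∫ ω, FDP n ω ∂P ≤ (1:ℝ) := fun n =>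
    (integral_mono (hint n) (integrable_const 1) (hFDP_le_one n)).trans_eq (by simp)
  have hcobdd : IsCoboundedUnder (· ≤ ·) atTop (fun n => ∫ ω, FDP n ω ∂P) :=
    isCoboundedUnder_le_of_le atTop hnonneg
  refine le_of_forall_pos_le_add fun ε hε => ?_
  have hlt : atTop.limsup (fun n => P (E n))
      < ENNReal.ofReal α + ENNReal.ofReal ε := by
    refine lt_of_le_of_lt hfwer ?_
    exact ENNReal.lt_add_right (by simp) (ENNReal.ofReal_pos.mpr hε).ne'
  have hev := eventually_lt_of_limsup_lt hlt
  refine limsup_le_of_le hcobdd ?_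
  filter_upwards [hev] with n hn
  have hP : (P (E n)).toReal ≤ α + ε := by
    have h1 : P (E n) ≤ ENNReal.ofReal (α + ε) := by
      rw [ENNReal.ofReal_add hα0 hε.le]
      exact hn.le
    calc (P (E n)).toReal ≤ (ENNReal.ofReal (α + ε)).toReal :=
          ENNReal.toReal_mono (by simp) h1
      _ ≤ α + ε := le_of_eq (ENNReal.toReal_ofReal (by linarith))
  calc ∫ ω, FDP n ω ∂P ≤ q + (1 - q) * (P (E n)).toReal := hIle n
    _ ≤ q + (1 - q) * (α + ε) := by
        exact add_le_add_right (mul_le_mul_of_nonneg_left hP (by linarith)) q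
    _ ≤ q * (1 - α) + α + ε := by nlinarith
end

section
/- Null variables do not change predictiveness: let p ≥ 1 be an integer and v : Finset (Fin p) → ℝ a monotone set function, and let T ⊆ Fin p be a finite set such that ψ_j(v) = 0 for every j ∈ T. Then v(s ∪ T) = v(s) for every subset s ⊆ Fin p. -/
/-- The Shapley population variable importance (SPVIM) of index `j` for the set
function `v`: the weighted sum, over all subsets `s` not containing `j`, of the
marginal gain in predictiveness from adding `j` to `s`. -/
noncomputable def spvim (p : ℕ) (v : Finset (Fin p) → ℝ) (j : Fin p) : ℝ :=
  ∑ s ∈ (Finset.univ.erase j).powerset,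
    (1 / (p : ℝ)) * ((Nat.choose (p - 1) s.card : ℝ))⁻¹ * (v (insert j s) - v s)

lemma insert_null_eq (p : ℕ) (hp : 1 ≤ p) (v : Finset (Fin p) → ℝ)
    (hv : Monotone v) (j : Fin p) (hj : spvim p v j = 0) (s : Finset (Fin p)) :
    v (insert j s) = v s := by
  by_cases hjs : j ∈ s
  · rw [Finset.insert_eq_self.mpr hjs]
  have hmem : s ∈ (Finset.univ.erase j).powerset := by
    rw [Finset.mem_powerset]
    intro x hx
    exact Finset.mem_erase.mpr ⟨fun h => hjs (h ▸ hx), Finset.mem_univ x⟩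
  have hnonneg : ∀ t ∈ (Finset.univ.erase j).powerset,
      0 ≤ (1 / (p : ℝ)) * ((Nat.choose (p - 1) t.card : ℝ))⁻¹ * (v (insert j t) - v t) := by
    intro t _
    apply mul_nonneg
    · positivity
    · linarith [hv (Finset.subset_insert j t)]
  have := (Finset.sum_eq_zero_iff_of_nonneg hnonneg).mp hj s hmem
  have hcard : s.card ≤ p - 1 := by
    have := Finset.card_le_card (Finset.mem_powerset.mp hmem)
    simpa [Finset.card_erase_of_mem, Finset.card_univ] using this
  have hchoose : (0 : ℝ) < (Nat.choose (p - 1) s.card : ℝ) := by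
    exact_mod_cast Nat.choose_pos hcard
  have hpp : (0 : ℝ) < (p : ℝ) := by exact_mod_cast hp
  have hw : (1 / (p : ℝ)) * ((Nat.choose (p - 1) s.card : ℝ))⁻¹ ≠ 0 := by
    positivity
  have := mul_eq_zero.mp this
  rcases this with h | h
  · exact absurd h hw
  · linarith

/-- Null variables do not change predictiveness: if every index of `T` has zero
Shapley population variable importance for the monotone set function `v`, then
adjoining `T` to any subset `s` leaves `v` unchanged. -/
theorem union_null_set_eq (p : ℕ) (hp : 1 ≤ p) (v : Finset (Fin p) → ℝ)
    (hv : Monotone v) (T : Finset (Fin p)) (hT : ∀ j ∈ T, spvim p v j = 0) :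
    ∀ s : Finset (Fin p), v (s ∪ T) = v s := by
  induction T using Finset.induction_on with
  | empty => simp
  | @insert j T hj ih =>
    intro s
    have h1 : s ∪ insert j T = insert j (s ∪ T) := by
      ext x; simp [or_comm, or_left_comm, or_assoc]
    rw [h1, insert_null_eq p hp v hv j (hT j (Finset.mem_insert_self j T)),
      ih (fun k hk => hT k (Finset.mem_insert_of_mem hk))]
end

section
/- The active set achieves full predictiveness: let p ≥ 1 be an integer and v : Finset (Fin p) → ℝ a monotone set function, and let S₀ ⊆ Fin p be such that ψ_j(v) = 0 for every j ∉ S₀. Then v(S₀) = v(Finset.univ), and consequently v(S₀) ≥ v(s) for every subset s ⊆ Fin p. -/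
lemma null_insert (p : ℕ) (hp : 1 ≤ p) (v : Finset (Fin p) → ℝ) (hv : Monotone v)
    (j : Fin p) (hj : spvim p v j = 0) (s : Finset (Fin p)) (hjs : j ∉ s) :
    v (insert j s) = v s := by
  have hpos : ∀ t ∈ (Finset.univ.erase j).powerset,
      0 < (1 / (p : ℝ)) * ((Nat.choose (p - 1) t.card : ℝ))⁻¹ := by
    intro t ht
    have ht' : t ⊆ Finset.univ.erase j := Finset.mem_powerset.mp ht
    have hc : t.card ≤ p - 1 := by
      have := Finset.card_le_card ht'
      simpa [Finset.card_erase_of_mem, Finset.card_univ] using this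
    have : 0 < Nat.choose (p - 1) t.card := Nat.choose_pos hc
    have hp' : (0 : ℝ) < p := by exact_mod_cast hp
    positivity
  have hnn : ∀ t ∈ (Finset.univ.erase j).powerset,
      0 ≤ (1 / (p : ℝ)) * ((Nat.choose (p - 1) t.card : ℝ))⁻¹ * (v (insert j t) - v t) := by
    intro t ht
    have := hpos t ht
    have hmono : v t ≤ v (insert j t) := hv (Finset.subset_insert j t)
    nlinarith
  have hzero := (Finset.sum_eq_zero_iff_of_nonneg hnn).mp hj
  have hsmem : s ∈ (Finset.univ.erase j).powerset := by
    refine Finset.mem_powerset.mpr ?_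
    intro x hx
    exact Finset.mem_erase.mpr ⟨fun h => hjs (h ▸ hx), Finset.mem_univ x⟩
  have := hzero s hsmem
  have hw := hpos s hsmem
  have : v (insert j s) - v s = 0 := by
    rcases mul_eq_zero.mp this with h | h
    · exact absurd h (ne_of_gt hw)
    · exact h
  linarith

/-- The active set achieves full predictiveness: if every index outside `S₀` has zero
Shapley population variable importance for the monotone set function `v`, then
`v(S₀) = v(univ)`, and consequently `v(S₀)` dominates `v(s)` for every subset `s`. -/
theorem active_set_full_predictiveness (p : ℕ) (hp : 1 ≤ p)
    (v : Finset (Fin p) → ℝ) (hv : Monotone v)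
    (S₀ : Finset (Fin p)) (hS₀ : ∀ j ∉ S₀, spvim p v j = 0) :
    v S₀ = v Finset.univ ∧ ∀ s : Finset (Fin p), v s ≤ v S₀ := by
  have key : ∀ t : Finset (Fin p), (∀ j ∈ t, j ∉ S₀) → v (S₀ ∪ t) = v S₀ := by
    intro t
    induction t using Finset.induction_on with
    | empty => simp
    | @insert a t ha ih =>
      intro hts
      have ha' : a ∉ S₀ := hts a (Finset.mem_insert_self a t)
      have hat : a ∉ S₀ ∪ t := by
        simp [ha, ha']
      have h1 : S₀ ∪ insert a t = insert a (S₀ ∪ t) := by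
        ext x; simp [Finset.mem_insert, Finset.mem_union, or_left_comm]
      rw [h1, null_insert p hp v hv a (hS₀ a ha') _ hat]
      exact ih fun j hj => hts j (Finset.mem_insert_of_mem hj)
  have hmain : v S₀ = v Finset.univ := by
    have := key S₀ᶜ (fun j hj => by simpa using hj)
    simpa [Finset.union_compl] using this.symm
  exact ⟨hmain, fun s => hmain ▸ hv (Finset.subset_univ s)⟩
end

section
/- Persistence of a consistent variable selection procedure (abstract core of Lemma 2): let p ≥ 1 be an integer, v : Finset (Fin p) → ℝ a monotone set function, and S₀ ⊆ Fin p a set such that ψ_j(v) = 0 for every j ∉ S₀. Let (Ω, F, P) be a probability space, and for each n ∈ ℕ let S_n : Ω → Finset (Fin p) be measurable with P({ω : S₀ ⊆ S_n(ω)}) → 1 as n → ∞, and let V_n : Ω → ℝ be measurable random variables such that V_n − v(S_n(·)) → 0 in probability (i.e., for every ε > 0, P(|V_n(ω) − v(S_n(ω))| > ε) → 0). Then V_n → v(Finset.univ) in probability: for every ε > 0, P({ω : |V_n(ω) − v(Finset.univ)| > ε}) → 0 as n → ∞. -/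
open MeasureTheory Filter

lemma marginal_zero (p : ℕ) (hp : 1 ≤ p) (v : Finset (Fin p) → ℝ) (hv : Monotone v)
    (j : Fin p) (hj : spvim p v j = 0) (s : Finset (Fin p)) (hs : j ∉ s) :
    v (insert j s) = v s := by
  have hmem : s ∈ (Finset.univ.erase j).powerset := by
    simp [Finset.mem_powerset, Finset.subset_erase, hs]
  have hnonneg : ∀ t ∈ (Finset.univ.erase j).powerset,
      0 ≤ (1 / (p : ℝ)) * ((Nat.choose (p - 1) t.card : ℝ))⁻¹ * (v (insert j t) - v t) := by
    intro t _
    have h1 : v t ≤ v (insert j t) := hv (Finset.subset_insert _ _)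
    have h2 : (0:ℝ) ≤ 1 / (p : ℝ) := by positivity
    have h3 : (0:ℝ) ≤ ((Nat.choose (p - 1) t.card : ℝ))⁻¹ := by positivity
    exact mul_nonneg (mul_nonneg h2 h3) (sub_nonneg.2 h1)
  have hzero := (Finset.sum_eq_zero_iff_of_nonneg hnonneg).1 hj s hmem
  have hcardle : s.card ≤ p - 1 := by
    have := Finset.card_le_card ((Finset.mem_powerset).1 hmem)
    simpa [Finset.card_erase_of_mem, Finset.card_univ] using this
  have hchoose : 0 < Nat.choose (p - 1) s.card := Nat.choose_pos hcardle
  have hpos : (0:ℝ) < (1 / (p : ℝ)) * ((Nat.choose (p - 1) s.card : ℝ))⁻¹ := by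
    have hp' : (0:ℝ) < p := by exact_mod_cast hp
    have : (0:ℝ) < (Nat.choose (p - 1) s.card : ℝ) := by exact_mod_cast hchoose
    positivity
  have : v (insert j s) - v s = 0 := by
    rcases mul_eq_zero.1 hzero with h | h
    · exact absurd h hpos.ne'
    · exact h
  linarith

lemma v_eq_univ (p : ℕ) (hp : 1 ≤ p) (v : Finset (Fin p) → ℝ) (hv : Monotone v)
    (S₀ : Finset (Fin p)) (hS₀ : ∀ j ∉ S₀, spvim p v j = 0) :
    ∀ n : ℕ, ∀ t : Finset (Fin p), S₀ ⊆ t → (Finset.univ \ t).card ≤ n →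
      v t = v Finset.univ := by
  intro n
  induction n with
  | zero =>
    intro t _ hcard
    have : Finset.univ \ t = ∅ := Finset.card_eq_zero.1 (Nat.le_zero.1 hcard)
    have ht : t = Finset.univ := by
      apply Finset.eq_univ_of_forall
      intro x
      by_contra hx
      have : x ∈ Finset.univ \ t := Finset.mem_sdiff.2 ⟨Finset.mem_univ x, hx⟩
      simp_all
    rw [ht]
  | succ n ih =>
    intro t hsub hcard
    by_cases hne : Finset.univ \ t = ∅
    · have ht : t = Finset.univ := by
        apply Finset.eq_univ_of_forall
        intro x
        by_contra hx
        have : x ∈ Finset.univ \ t := Finset.mem_sdiff.2 ⟨Finset.mem_univ x, hx⟩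
        simp_all
      rw [ht]
    · obtain ⟨j, hj⟩ := Finset.nonempty_iff_ne_empty.2 hne
      have hjt : j ∉ t := (Finset.mem_sdiff.1 hj).2
      have hjS₀ : j ∉ S₀ := fun h => hjt (hsub h)
      have heq : v (insert j t) = v t :=
        marginal_zero p hp v hv j (hS₀ j hjS₀) t hjt
      have hsd : Finset.univ \ insert j t = (Finset.univ \ t).erase j := by
        ext x
        simp only [Finset.mem_sdiff, Finset.mem_erase, Finset.mem_insert, Finset.mem_univ,
          true_and, not_or]
      have hcard' : (Finset.univ \ insert j t).card ≤ n := by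
        rw [hsd, Finset.card_erase_of_mem hj]
        omega
      rw [← heq]
      exact ih (insert j t) (hsub.trans (Finset.subset_insert _ _)) hcard'

/-- Persistence of a consistent variable selection procedure (abstract core of
Lemma 2): if every index outside `S₀` has zero SPVIM for the monotone predictiveness
`v`, the selected sets `S n` contain `S₀` with probability tending to one, and the
achieved predictiveness `V n` matches `v (S n ·)` in probability, then `V n` converges
in probability to the optimal predictiveness `v univ`. -/
theorem persistence
    (p : ℕ) (hp : 1 ≤ p) (v : Finset (Fin p) → ℝ) (hv : Monotone v)
    (S₀ : Finset (Fin p)) (hS₀ : ∀ j ∉ S₀, spvim p v j = 0)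
    {Ω : Type*} [MeasurableSpace Ω] (P : Measure Ω) [IsProbabilityMeasure P]
    (S : ℕ → Ω → Finset (Fin p))
    (hSmeas : ∀ n, @Measurable Ω (Finset (Fin p)) _ ⊤ (S n))
    (hScons : Tendsto (fun n => P {ω | S₀ ⊆ S n ω}) atTop (nhds 1))
    (V : ℕ → Ω → ℝ) (hVmeas : ∀ n, Measurable (V n))
    (hVcons : ∀ ε > (0 : ℝ),
      Tendsto (fun n => P {ω | ε < |V n ω - v (S n ω)|}) atTop (nhds 0)) :
    ∀ ε > (0 : ℝ),
      Tendsto (fun n => P {ω | ε < |V n ω - v Finset.univ|}) atTop (nhds 0) := by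
  intro ε hε
  have hAmeas : ∀ n, MeasurableSet {ω | S₀ ⊆ S n ω} := by
    intro n
    exact hSmeas n (show MeasurableSet[⊤] {t | S₀ ⊆ t} from trivial)
  have hle : ∀ n, P {ω | ε < |V n ω - v Finset.univ|} ≤
      P {ω | S₀ ⊆ S n ω}ᶜ + P {ω | ε < |V n ω - v (S n ω)|} := by
    intro n
    refine le_trans (measure_mono ?_) (measure_union_le _ _)
    intro ω hω
    by_cases h : S₀ ⊆ S n ω
    · right
      have : v (S n ω) = v Finset.univ :=
        v_eq_univ p hp v hv S₀ hS₀ (Finset.univ \ S n ω).card (S n ω) h le_rfl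
      simpa [this] using hω
    · exact Or.inl h
  have hcompl : Tendsto (fun n => P {ω | S₀ ⊆ S n ω}ᶜ) atTop (nhds 0) := by
    have : ∀ n, P {ω | S₀ ⊆ S n ω}ᶜ = 1 - P {ω | S₀ ⊆ S n ω} := by
      intro n
      exact prob_compl_eq_one_sub (hAmeas n)
    simp_rw [this]
    have := ENNReal.Tendsto.sub (tendsto_const_nhds (x := (1 : ENNReal))) hScons
      (Or.inl ENNReal.one_ne_top)
    simpa using this
  have hsum : Tendsto
      (fun n => P {ω | S₀ ⊆ S n ω}ᶜ + P {ω | ε < |V n ω - v (S n ω)|})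
      atTop (nhds 0) := by
    have := hcompl.add (hVcons ε hε)
    simpa using this
  exact tendsto_of_tendsto_of_tendsto_of_le_of_le tendsto_const_nhds hsum
    (fun n => zero_le) hle
end

section
/- Deterministic key lemma for the Holm procedure: let m ≥ 1 be an integer, α ∈ (0,1), x : Fin m → [0,1] a vector of p-values, and N ⊆ Fin m a nonempty set. If the Holm procedure at level α rejects some index i ∈ N, then min_{i ∈ N} x_i < α / |N|. -/
/-- The Holm-adjusted p-value of index `i`: with `σ = Tuple.sort x` a rank-ordering of
the p-values `x` (so that `x ∘ σ` is nondecreasing) and `j = σ⁻¹ i` the rank of `i`,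
the adjusted p-value is `max_{ℓ ≤ j} min ((m - ℓ) * x (σ ℓ)) 1` (with ranks `ℓ`
zero-based, so that `m - ℓ` is the paper's `m - ℓ + 1` for one-based ranks). -/
noncomputable def holmAdjusted {m : ℕ} (x : Fin m → ℝ) (i : Fin m) : ℝ :=
  Finset.sup' (Finset.Iic ((Tuple.sort x).symm i)) Finset.nonempty_Iic
    (fun ℓ => min (((m - (ℓ : ℕ) : ℕ) : ℝ) * x (Tuple.sort x ℓ)) 1)

/-- The Holm procedure at level `α` rejects index `i` iff its Holm-adjusted p-value is
below `α`. -/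
def holmReject {m : ℕ} (x : Fin m → ℝ) (α : ℝ) (i : Fin m) : Prop :=
  holmAdjusted x i < α

/-- Deterministic key lemma for the Holm procedure: if the Holm procedure at level
`α ∈ (0,1)` rejects some index of the nonempty set `N`, then the smallest p-value over
`N` is below `α / |N|`. -/
theorem holm_key_lemma (m : ℕ) (hm : 1 ≤ m) (α : ℝ) (hα : α ∈ Set.Ioo (0 : ℝ) 1)
    (x : Fin m → ℝ) (hx : ∀ i, x i ∈ Set.Icc (0 : ℝ) 1)
    (N : Finset (Fin m)) (hN : N.Nonempty)
    (h : ∃ i ∈ N, holmReject x α i) :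
    N.inf' hN x < α / (N.card : ℝ) := by
  obtain ⟨i, hiN, hrej⟩ := h
  set σ := Tuple.sort x with hσ
  -- ranks of N
  set R : Finset (Fin m) := N.image σ.symm with hR
  have hRne : R.Nonempty := hN.image _
  set ℓ₀ : Fin m := R.min' hRne with hℓ₀
  have hℓ₀R : ℓ₀ ∈ R := R.min'_mem hRne
  have hσℓ₀ : σ ℓ₀ ∈ N := by
    obtain ⟨n, hn, hns⟩ := Finset.mem_image.mp hℓ₀R
    rw [← hns]; simpa using hn
  have hle : ℓ₀ ≤ σ.symm i := R.min'_le _ (Finset.mem_image_of_mem _ hiN)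
  -- from rejection get the bound at ℓ₀
  have hbound : min (((m - (ℓ₀ : ℕ) : ℕ) : ℝ) * x (σ ℓ₀)) 1 < α := by
    have := Finset.le_sup' (f := fun ℓ : Fin m => min (((m - (ℓ : ℕ) : ℕ) : ℝ) * x (σ ℓ)) 1)
      (Finset.mem_Iic.mpr hle)
    exact lt_of_le_of_lt this hrej
  have hmul : ((m - (ℓ₀ : ℕ) : ℕ) : ℝ) * x (σ ℓ₀) < α := by
    rcases min_cases (((m - (ℓ₀ : ℕ) : ℕ) : ℝ) * x (σ ℓ₀)) 1 with ⟨heq, _⟩ | ⟨heq, hlt⟩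
    · rwa [heq] at hbound
    · rw [heq] at hbound; linarith [hα.2]
  -- card bound: N.card ≤ m - ℓ₀
  have hcard : N.card ≤ m - (ℓ₀ : ℕ) := by
    have hsub : R ⊆ Finset.Ici ℓ₀ := fun r hr => Finset.mem_Ici.mpr (R.min'_le _ hr)
    have h1 : R.card ≤ (Finset.Ici ℓ₀).card := Finset.card_le_card hsub
    have h2 : R.card = N.card := Finset.card_image_of_injective _ σ.symm.injective
    rwa [Fin.card_Ici, h2] at h1
  have hpos : 0 < m - (ℓ₀ : ℕ) := by omega
  have hNpos : 0 < (N.card : ℝ) := by exact_mod_cast hN.card_pos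
  have hxpos : x (σ ℓ₀) < α / ((m - (ℓ₀ : ℕ) : ℕ) : ℝ) := by
    rw [lt_div_iff₀ (by exact_mod_cast hpos)]
    linarith [hmul]
  have hdiv : α / ((m - (ℓ₀ : ℕ) : ℕ) : ℝ) ≤ α / (N.card : ℝ) :=
    div_le_div_of_nonneg_left (le_of_lt hα.1) hNpos (by exact_mod_cast hcard)
  calc N.inf' hN x ≤ x (σ ℓ₀) := Finset.inf'_le _ hσℓ₀
    _ < α / ((m - (ℓ₀ : ℕ) : ℕ) : ℝ) := hxpos
    _ ≤ α / (N.card : ℝ) := hdiv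
end

section
/- Familywise error rate control of the Holm procedure (supplementary Lemma S1(a)): let m ≥ 1 be an integer, α ∈ (0,1), (Ω, F, P) a probability space, N ⊆ Fin m a set of null indices, and x : Ω → (Fin m → [0,1]) measurable p-values that are superuniform on the nulls, i.e., for every i ∈ N and every u ∈ [0,1], P({ω : x_i(ω) ≤ u}) ≤ u. Then the probability that the Holm procedure at level α rejects at least one index in N is at most α: P({ω : ∃ i ∈ N, the Holm procedure at level α applied to x(ω) rejects i}) ≤ α. -/
open MeasureTheory

/-- Holm key lemma: if the Holm procedure rejects some null index, then some null
p-value is below `α / |N|`. -/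
lemma holm_key {m : ℕ} (x : Fin m → ℝ) (hx0 : ∀ i, 0 ≤ x i) (α : ℝ) (hα1 : α < 1)
    (N : Finset (Fin m)) {i : Fin m} (hi : i ∈ N) (hrej : holmReject x α i) :
    ∃ j ∈ N, (N.card : ℝ) * x j < α := by
  set σ := Tuple.sort x with hσ
  set R : Finset (Fin m) := N.image σ.symm with hR
  have hRne : R.Nonempty := ⟨σ.symm i, Finset.mem_image_of_mem _ hi⟩
  set j := R.min' hRne with hjdef
  have hjR : j ∈ R := R.min'_mem hRne
  obtain ⟨i', hi'N, hi'⟩ := Finset.mem_image.mp hjR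
  have hσj : σ j ∈ N := by
    rw [← hi']; simpa using hi'N
  have hjle : j ≤ σ.symm i := R.min'_le _ (Finset.mem_image_of_mem _ hi)
  have hterm : min (((m - (j : ℕ) : ℕ) : ℝ) * x (σ j)) 1 < α := by
    refine lt_of_le_of_lt ?_ hrej
    exact Finset.le_sup' (fun ℓ : Fin m => min (((m - (ℓ : ℕ) : ℕ) : ℝ) * x (σ ℓ)) 1)
      (Finset.mem_Iic.mpr hjle)
  have hprod : ((m - (j : ℕ) : ℕ) : ℝ) * x (σ j) < α := by
    rcases min_lt_iff.mp hterm with h | h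
    · exact h
    · linarith
  have hsub : R ⊆ Finset.Ici j := fun k hk => Finset.mem_Ici.mpr (R.min'_le _ hk)
  have hcard : N.card ≤ m - (j : ℕ) := by
    have h1 : R.card = N.card := Finset.card_image_of_injective _ σ.symm.injective
    have h2 : R.card ≤ (Finset.Ici j).card := Finset.card_le_card hsub
    rw [h1, Fin.card_Ici] at h2
    exact h2
  refine ⟨σ j, hσj, lt_of_le_of_lt ?_ hprod⟩
  exact mul_le_mul_of_nonneg_right (by exact_mod_cast hcard) (hx0 _)

/-- Familywise error rate control of the Holm procedure: if the p-values are
superuniform on the null indices `N`, then the probability that the Holm procedure at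
level `α ∈ (0,1)` rejects at least one index of `N` is at most `α`. -/
theorem holm_fwer_control (m : ℕ) (hm : 1 ≤ m) (α : ℝ) (hα : α ∈ Set.Ioo (0 : ℝ) 1)
    {Ω : Type*} [MeasurableSpace Ω] (P : Measure Ω) [IsProbabilityMeasure P]
    (N : Finset (Fin m))
    (x : Ω → Fin m → ℝ) (hxmeas : Measurable x)
    (hx01 : ∀ ω i, x ω i ∈ Set.Icc (0 : ℝ) 1)
    (hsuper : ∀ i ∈ N, ∀ u ∈ Set.Icc (0 : ℝ) 1,
      P {ω | x ω i ≤ u} ≤ ENNReal.ofReal u) :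
    P {ω | ∃ i ∈ N, holmReject (x ω) α i} ≤ ENNReal.ofReal α := by
  rcases N.eq_empty_or_nonempty with hN | hN
  · simp [hN]
  have hn : 0 < N.card := Finset.card_pos.mpr hN
  have hnR : (0 : ℝ) < N.card := by exact_mod_cast hn
  have hu : α / N.card ∈ Set.Icc (0 : ℝ) 1 := by
    constructor
    · exact div_nonneg hα.1.le hnR.le
    · have : α / N.card ≤ α := by
        apply div_le_self hα.1.le
        exact_mod_cast hn
      linarith [hα.2]
  have hsubset : {ω | ∃ i ∈ N, holmReject (x ω) α i} ⊆
      ⋃ i ∈ N, {ω | x ω i ≤ α / N.card} := by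
    rintro ω ⟨i, hi, hrej⟩
    obtain ⟨j, hjN, hjlt⟩ := holm_key (x ω) (fun k => (hx01 ω k).1) α hα.2 N hi hrej
    refine Set.mem_biUnion hjN ?_
    have := (le_div_iff₀ hnR).mpr (by linarith [hjlt] : x ω j * N.card ≤ α)
    exact this
  calc P {ω | ∃ i ∈ N, holmReject (x ω) α i}
      ≤ P (⋃ i ∈ N, {ω | x ω i ≤ α / N.card}) := measure_mono hsubset
    _ ≤ ∑ i ∈ N, P {ω | x ω i ≤ α / N.card} := measure_biUnion_finset_le _ _
    _ ≤ ∑ _i ∈ N, ENNReal.ofReal (α / N.card) :=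
        Finset.sum_le_sum (fun i hi => hsuper i hi _ hu)
    _ = N.card • ENNReal.ofReal (α / N.card) := Finset.sum_const _
    _ = ENNReal.ofReal ((N.card : ℝ) * (α / N.card)) := by
        rw [nsmul_eq_mul, ← ENNReal.ofReal_natCast,
          ← ENNReal.ofReal_mul (by positivity)]
    _ = ENNReal.ofReal α := by
        rw [mul_div_cancel₀ _ (ne_of_gt hnR)]
end

section
/- Finite-sample PFP(q) control of Holm-based intrinsic selection followed by augmentation (Theorem 1 instantiated with the Holm procedure): let m ≥ 1 be an integer, α ∈ (0,1), q ∈ (0,1), (Ω, F, P) a probability space, N ⊆ Fin m a set of null indices, and x : Ω → (Fin m → [0,1]) measurable p-values that are superuniform on the nulls, i.e., for every i ∈ N and every u ∈ [0,1], P({ω : x_i(ω) ≤ u}) ≤ u. Let S(ω) ⊆ Fin m be the set rejected by the Holm procedure at level α applied to x(ω), and let A : Ω → Finset (Fin m) be any measurable map such that for every ω, A(ω) ∩ S(ω) = ∅ and |A(ω)| ≤ q · (|A(ω)| + |S(ω)|). Then P({ω : S(ω) ∪ A(ω) ≠ ∅ and |(S(ω) ∪ A(ω)) ∩ N| > q ·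 |S(ω) ∪ A(ω)|}) ≤ α. -/
open MeasureTheory

/-- The set of indices rejected by the Holm procedure at level `α`. -/
noncomputable def holmRejectSet {m : ℕ} (x : Fin m → ℝ) (α : ℝ) : Finset (Fin m) :=
  Finset.univ.filter (fun i => holmAdjusted x i < α)

/-- If Holm rejects some null index, then some null index has p-value below `α / |N|`. -/
lemma holm_fwer_aux {m : ℕ} (x : Fin m → ℝ) (α : ℝ) (hα1 : α < 1)
    (hx0 : ∀ i, 0 ≤ x i) (N : Finset (Fin m)) {i : Fin m} (hiN : i ∈ N)
    (hrej : holmAdjusted x i < α) :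
    ∃ i' ∈ N, (N.card : ℝ) * x i' < α := by
  classical
  have hne : (N.image (Tuple.sort x).symm).Nonempty :=
    ⟨(Tuple.sort x).symm i, Finset.mem_image_of_mem _ hiN⟩
  set σ : Equiv.Perm (Fin m) := Tuple.sort x with hσ
  set j := (N.image σ.symm).min' hne with hj
  obtain ⟨i0, hi0N, hi0⟩ := Finset.mem_image.mp ((N.image σ.symm).min'_mem hne)
  have hσjN : σ j ∈ N := by
    have hji : σ j = i0 := by rw [hj, ← hi0]; exact σ.apply_symm_apply i0
    rw [hji]; exact hi0N
  refine ⟨σ j, hσjN, ?_⟩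
  have hjle : j ≤ σ.symm i := Finset.min'_le _ _ (Finset.mem_image_of_mem _ hiN)
  have hle : min (((m - (j : ℕ) : ℕ) : ℝ) * x (σ j)) 1 ≤ holmAdjusted x i := by
    unfold holmAdjusted
    exact Finset.le_sup' (fun ℓ : Fin m => min (((m - (ℓ : ℕ) : ℕ) : ℝ) * x (Tuple.sort x ℓ)) 1)
      (Finset.mem_Iic.mpr hjle)
  have h1 : ((m - (j : ℕ) : ℕ) : ℝ) * x (σ j) < α := by
    have := lt_of_le_of_lt hle hrej
    rcases min_lt_iff.mp this with h | h
    · exact h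
    · linarith
  haveI : NeZero m := ⟨(Fin.pos j).ne'⟩
  have hcard : N.card ≤ m - (j : ℕ) := by
    have hsub : N.image σ.symm ⊆ Finset.Ici j := fun k hk =>
      Finset.mem_Ici.mpr (Finset.min'_le _ _ hk)
    calc N.card = (N.image σ.symm).card :=
          (Finset.card_image_of_injective _ σ.symm.injective).symm
      _ ≤ (Finset.Ici j).card := Finset.card_le_card hsub
      _ = m - (j : ℕ) := Fin.card_Ici j
  have : (N.card : ℝ) * x (σ j) ≤ ((m - (j : ℕ) : ℕ) : ℝ) * x (σ j) :=
    mul_le_mul_of_nonneg_right (Nat.cast_le.mpr hcard) (hx0 _)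
  linarith

/-- Finite-sample PFP(q) control of Holm-based intrinsic selection followed by
augmentation: if the p-values are superuniform on the null indices `N`, the set `S ω`
rejected by the Holm procedure at level `α` is augmented by any measurable set `A ω`
disjoint from `S ω` with `|A ω| ≤ q (|A ω| + |S ω|)`, then the probability that the
proportion of null indices among the selected indices exceeds `q` is at most `α`. -/
theorem holm_augmented_pfp (m : ℕ) (hm : 1 ≤ m) (α : ℝ) (hα : α ∈ Set.Ioo (0 : ℝ) 1)
    (q : ℝ) (hq : q ∈ Set.Ioo (0 : ℝ) 1)
    {Ω : Type*} [MeasurableSpace Ω] (P : Measure Ω) [IsProbabilityMeasure P]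
    (N : Finset (Fin m))
    (x : Ω → Fin m → ℝ) (hxmeas : Measurable x)
    (hx01 : ∀ ω i, x ω i ∈ Set.Icc (0 : ℝ) 1)
    (hsuper : ∀ i ∈ N, ∀ u ∈ Set.Icc (0 : ℝ) 1,
      P {ω | x ω i ≤ u} ≤ ENNReal.ofReal u)
    (A : Ω → Finset (Fin m))
    (hA : @Measurable Ω (Finset (Fin m)) _ ⊤ A)
    (hdisj : ∀ ω, A ω ∩ holmRejectSet (x ω) α = ∅)
    (hprop : ∀ ω, ((A ω).card : ℝ) ≤
      q * (((A ω).card : ℝ) + ((holmRejectSet (x ω) α).card : ℝ))) :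
    P {ω | holmRejectSet (x ω) α ∪ A ω ≠ ∅ ∧
        q * (((holmRejectSet (x ω) α ∪ A ω).card : ℝ)) <
          (((holmRejectSet (x ω) α ∪ A ω) ∩ N).card : ℝ)} ≤ ENNReal.ofReal α := by
  classical
  obtain ⟨hα0, hα1⟩ := hα
  set n := N.card with hn
  have hsubset : {ω | holmRejectSet (x ω) α ∪ A ω ≠ ∅ ∧
        q * (((holmRejectSet (x ω) α ∪ A ω).card : ℝ)) <
          (((holmRejectSet (x ω) α ∪ A ω) ∩ N).card : ℝ)} ⊆
      ⋃ i ∈ N, {ω | x ω i ≤ α / n} := by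
    intro ω hω
    obtain ⟨hne, hlt⟩ := hω
    set S := holmRejectSet (x ω) α with hS
    -- first show S ∩ N is nonempty
    have hSN : (S ∩ N).Nonempty := by
      by_contra h
      rw [Finset.not_nonempty_iff_eq_empty] at h
      have hsub : (S ∪ A ω) ∩ N ⊆ A ω := by
        intro k hk
        obtain ⟨hk1, hk2⟩ := Finset.mem_inter.mp hk
        rcases Finset.mem_union.mp hk1 with hkS | hkA
        · exact absurd (Finset.mem_inter.mpr ⟨hkS, hk2⟩) (by simp [h])
        · exact hkA
      have hc1 : (((S ∪ A ω) ∩ N).card : ℝ) ≤ (A ω).card :=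
        Nat.cast_le.mpr (Finset.card_le_card hsub)
      have hdisj' : Disjoint S (A ω) :=
        (Finset.disjoint_iff_inter_eq_empty.mpr (hdisj ω)).symm
      have hcu : ((S ∪ A ω).card : ℝ) = (S.card : ℝ) + (A ω).card := by
        rw [Finset.card_union_of_disjoint hdisj']; push_cast; ring
      have := hprop ω
      rw [← hS] at this
      have : (((S ∪ A ω) ∩ N).card : ℝ) ≤ q * ((S ∪ A ω).card : ℝ) := by
        rw [hcu]; linarith
      linarith
    obtain ⟨i, hi⟩ := hSN
    obtain ⟨hiS, hiN⟩ := Finset.mem_inter.mp hi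
    have hiS' : holmAdjusted (x ω) i < α := by
      simpa [hS, holmRejectSet] using hiS
    obtain ⟨i', hi'N, hlt'⟩ :=
      holm_fwer_aux (x ω) α hα1 (fun j => (hx01 ω j).1) N hiN hiS'
    have hnpos : (0 : ℝ) < n := by
      exact_mod_cast Finset.card_pos.mpr ⟨i', hi'N⟩
    refine Set.mem_biUnion hi'N ?_
    show x ω i' ≤ α / n
    rw [le_div_iff₀ hnpos]
    linarith [mul_comm (n : ℝ) (x ω i')]
  calc P _ ≤ P (⋃ i ∈ N, {ω | x ω i ≤ α / n}) := measure_mono hsubset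
    _ ≤ ∑ i ∈ N, P {ω | x ω i ≤ α / n} := measure_biUnion_finset_le _ _
    _ ≤ ∑ _i ∈ N, ENNReal.ofReal (α / n) := by
        refine Finset.sum_le_sum fun i hi => ?_
        have hnpos : (0 : ℝ) < n := by
          exact_mod_cast Finset.card_pos.mpr ⟨i, hi⟩
        have h1n : (1 : ℝ) ≤ n := by exact_mod_cast Finset.card_pos.mpr ⟨i, hi⟩
        exact hsuper i hi _ ⟨le_of_lt (div_pos hα0 hnpos), by
          rw [div_le_one hnpos]; linarith⟩
    _ = (n : ℕ) • ENNReal.ofReal (α / n) := by rw [Finset.sum_const]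
    _ ≤ ENNReal.ofReal α := by
        rcases Nat.eq_zero_or_pos n with h0 | hpos
        · simp [h0]
        · have hnpos : (0 : ℝ) < n := by exact_mod_cast hpos
          rw [nsmul_eq_mul, ← ENNReal.ofReal_natCast,
            ← ENNReal.ofReal_mul (by positivity)]
          apply ENNReal.ofReal_le_ofReal
          rw [mul_div_cancel₀]
          exact ne_of_gt hnpos
end
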